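/- Let m < n be positive integers with n ≠ m + gcd(m,n), let K be an infinite field, and let T = (T_{ijk}), 1 ≤ i ≤ m, 1 ≤ j ≤ n, k ∈ {1,2}, be a 3-tensor of independent indeterminates with X = (T_{ij1}), Y = (T_{ij2}). Then K[T]^{SL(m,K)×SL(n,K)} = K, i.e., the only invariant polynomials under the action (P,Q)·X = PᵀXQ, (P,Q)·Y = PᵀYQ are the constants. -/

import Mathlib

open MvPolynomial

/-- The K-algebra endomorphism of K[T] induced by (P,Q): X ↦ PᵀXQ, Y ↦ PᵀYQ,
i.e. the variable T_{ijk} is sent to Σ_{a,b} P_{ai} Q_{bj} T_{abk}. -/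
noncomputable def slPairAction (K : Type*) [CommSemiring K] (m n : ℕ)
    (P : Matrix (Fin m) (Fin m) K) (Q : Matrix (Fin n) (Fin n) K) :
    MvPolynomial (Fin m × Fin n × Fin 2) K →ₐ[K] MvPolynomial (Fin m × Fin n × Fin 2) K :=
  MvPolynomial.aeval fun v =>
    ∑ a : Fin m, ∑ b : Fin n,
      MvPolynomial.C (P a v.1 * Q b v.2.1) * MvPolynomial.X (a, b, v.2.2)

open Matrix

namespace SLPairAux

variable {K : Type*} [Field K]

section Chain

variable {m n : ℕ} (X Y : Matrix (Fin m) (Fin n) K)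

def IsSol (d : ℕ) (v : ℕ → Fin n → K) : Prop :=
  X.mulVec (v 0) = 0 ∧ (∀ i, X.mulVec (v (i + 1)) + Y.mulVec (v i) = 0) ∧
    (∀ i, d < i → v i = 0) ∧ ∃ i, v i ≠ 0

lemma exists_sol (hm : 0 < m) (hmn : m < n) :
    ∃ v, IsSol X Y (m / (n - m)) v := by
  classical
  set q := n - m with hq
  have hq0 : 0 < q := by omega
  set d := m / q with hd
  have hn : n = m + q := by omega
  have h1 : q * d + m % q = m := Nat.div_add_mod m q
  have h2 : m % q < q := Nat.mod_lt _ hq0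
  have hcount : (d + 2) * m < (d + 1) * n := by nlinarith
  -- the padding map
  let pad : (Fin (d + 1) → Fin n → K) → ℕ → Fin n → K := fun v i =>
    if h : i < d + 1 then v ⟨i, h⟩ else 0
  have pad_add : ∀ v w i, pad (v + w) i = pad v i + pad w i := by
    intro v w i; simp only [pad]; split <;> simp
  have pad_smul : ∀ (c : K) v i, pad (c • v) i = c • pad v i := by
    intro c v i; simp only [pad]; split <;> simp
  let Φ : (Fin (d + 1) → Fin n → K) →ₗ[K] (Fin (d + 2) → Fin m → K) :=
    { toFun := fun v i =>
        X.mulVec (pad v i.val) +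
          (if i.val = 0 then 0 else Y.mulVec (pad v (i.val - 1)))
      map_add' := by
        intro v w; funext i
        simp only [pad_add, Matrix.mulVec_add, Pi.add_apply]
        split <;> [skip; skip] <;> abel
      map_smul' := by
        intro c v; funext i
        simp only [pad_smul, Matrix.mulVec_smul, RingHom.id_apply, Pi.smul_apply]
        split <;> simp <;> abel }
  have e1 : Module.finrank K (Fin (d + 1) → Fin n → K) = (d + 1) * n := by
    rw [Module.finrank_pi_fintype]
    simp [Module.finrank_pi, Finset.sum_const, mul_comm]
  have e2 : Module.finrank K (Fin (d + 2) → Fin m → K) = (d + 2) * m := by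
    rw [Module.finrank_pi_fintype]
    simp [Module.finrank_pi, Finset.sum_const, mul_comm]
  have hnotinj : ¬ Function.Injective Φ := by
    intro hinj
    have hle := LinearMap.finrank_le_finrank_of_injective hinj
    rw [e1, e2] at hle
    omega
  have hker : LinearMap.ker Φ ≠ ⊥ := fun h => hnotinj (LinearMap.ker_eq_bot.mp h)
  obtain ⟨v, hvker, hv0⟩ := Submodule.exists_mem_ne_zero_of_ne_bot hker
  have hΦ : ∀ i : Fin (d + 2), X.mulVec (pad v i.val) +
      (if i.val = 0 then 0 else Y.mulVec (pad v (i.val - 1))) = 0 := by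
    intro i
    have := LinearMap.mem_ker.mp hvker
    exact congrFun this i
  refine ⟨pad v, ?_, ?_, ?_, ?_⟩
  · have h0 := hΦ 0
    simpa using h0
  · intro i
    by_cases hi : i + 1 < d + 2
    · have h := hΦ ⟨i + 1, hi⟩
      simpa using h
    · have hp1 : pad v (i + 1) = 0 := by simp only [pad]; rw [dif_neg]; omega
      have hp2 : pad v i = 0 := by simp only [pad]; rw [dif_neg]; omega
      simp [hp1, hp2]
  · intro i hi
    simp only [pad]; rw [dif_neg]; omega
  · obtain ⟨j, hj⟩ := Function.ne_iff.mp hv0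
    exact ⟨j.val, by simpa [pad, j.isLt, Nat.le_of_lt_succ j.isLt] using hj⟩

end Chain

section Min
variable {m n : ℕ} (X Y : Matrix (Fin m) (Fin n) K)

lemma exists_min_sol (hm : 0 < m) (hmn : m < n) :
    ∃ (ε : ℕ) (v : ℕ → Fin n → K), IsSol X Y ε v ∧ ε ≤ m / (n - m) ∧
      LinearIndependent K (fun i : Fin (ε + 1) => v i.val) := by
  classical
  have hex : ∃ d, ∃ v, IsSol X Y d v := ⟨_, exists_sol X Y hm hmn⟩
  set ε := Nat.find hex with hεdef
  obtain ⟨v, hC1, hC2, hsupp, hne⟩ := Nat.find_spec hex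
  have hεle : ε ≤ m / (n - m) := Nat.find_min' hex (exists_sol X Y hm hmn)
  -- v 0 ≠ 0
  have hv0 : v 0 ≠ 0 := by
    intro h0
    rcases Nat.eq_zero_or_pos ε with hε0 | hε1
    · obtain ⟨i, hi⟩ := hne
      rcases Nat.eq_zero_or_pos i with rfl | hipos
      · exact hi h0
      · exact hi (hsupp i (by omega))
    · -- shift down
      have : ∃ w, IsSol X Y (ε - 1) w := by
        refine ⟨fun k => v (k + 1), ?_, ?_, ?_, ?_⟩
        · have := hC2 0
          rw [h0] at this
          simpa using this
        · intro i; exact hC2 (i + 1)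
        · intro i hi; exact hsupp (i + 1) (by omega)
        · obtain ⟨i, hi⟩ := hne
          rcases Nat.eq_zero_or_pos i with rfl | hipos
          · exact absurd h0 hi
          · exact ⟨i - 1, by simpa [Nat.sub_add_cancel hipos] using hi⟩
      exact absurd this (Nat.find_min hex (by omega))
  refine ⟨ε, v, ⟨hC1, hC2, hsupp, hne⟩, hεle, ?_⟩
  by_contra hdep
  obtain ⟨g, hgsum, i₀, hi₀⟩ := Fintype.not_linearIndependent_iff.mp hdep
  set F : Finset (Fin (ε + 1)) := Finset.univ.filter (fun i => g i ≠ 0) with hF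
  have hFne : F.Nonempty := ⟨i₀, by simp [hF, hi₀]⟩
  set r : Fin (ε + 1) := F.max' hFne with hrdef
  have hgr : g r ≠ 0 := by
    have := F.max'_mem hFne
    simpa [hF] using this
  have hgt : ∀ i : Fin (ε + 1), r < i → g i = 0 := by
    intro i hi
    by_contra hgi
    exact absurd (F.le_max' i (by simp [hF, hgi])) (by exact not_le.mpr hi)
  set rv := (r : ℕ) with hrv
  -- extend coefficients to ℕ
  set c : ℕ → K := fun i => if h : i < ε + 1 then g ⟨i, h⟩ else 0 with hc
  have hcr : c rv = g r := by simp [hc, r.isLt, show rv ≤ ε from Nat.le_of_lt_succ r.isLt]; rfl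
  have hczero : ∀ i, rv < i → c i = 0 := by
    intro i hi
    by_cases h : i < ε + 1
    · simpa [hc, h, Nat.le_of_lt_succ h] using hgt ⟨i, h⟩ (by simpa [Fin.lt_def] using hi)
    · simp [hc, h, show ¬ i ≤ ε by omega]
  have hcsum : ∑ i ∈ Finset.range (ε + 1), c i • v i = 0 := by
    rw [Finset.sum_range fun i => c i • v i] at *
    · calc ∑ i : Fin (ε + 1), c i • v i
          = ∑ i : Fin (ε + 1), g i • v i := by
            refine Finset.sum_congr rfl fun i _ => ?_
            simp [hc, i.isLt, Nat.le_of_lt_succ i.isLt]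
        _ = 0 := hgsum
  have hcsum' : ∑ i ∈ Finset.range (rv + 1), c i • v i = 0 := by
    rw [← hcsum]
    have hrlt : rv < ε + 1 := r.isLt
    refine Finset.sum_subset (by intro a ha; simp only [Finset.mem_range] at *; omega) ?_
    intro i hi hni
    have : rv < i := by simp at hi hni; omega
    simp [hczero i this]
  have hXv : ∀ j, X.mulVec (v (j + 1)) = - Y.mulVec (v j) := fun j =>
    eq_neg_of_add_eq_zero_left (hC2 j)
  rcases Nat.eq_zero_or_pos rv with hrv0 | hrvpos
  · have h00 : c 0 • v 0 = 0 := by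
      have h := hcsum'
      rw [hrv0] at h
      simpa using h
    have hc0 : c 0 ≠ 0 := by
      rw [hrv0] at hcr
      rw [hcr]; exact hgr
    rcases smul_eq_zero.mp h00 with h | h
    · exact hc0 h
    · exact hv0 h
  · set s := rv - 1 with hs
    have hrvs : rv = s + 1 := by omega
    set w : ℕ → Fin n → K := fun k =>
      if k < rv then ∑ j ∈ Finset.range (k + 1), c (rv + j - k) • v j else 0 with hwdef
    have hw0 : w 0 = c rv • v 0 := by
      simp [hwdef, hrvpos]
    have hrε : rv ≤ ε := by have := r.isLt; omega
    have hwsol : IsSol X Y s w := by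
      refine ⟨?_, ?_, ?_, ?_⟩
      · rw [hw0, Matrix.mulVec_smul, hC1, smul_zero]
      · intro k
        by_cases hk : k + 1 < rv
        · have hwk1 : w (k + 1) = ∑ j ∈ Finset.range (k + 2), c (rv + j - (k + 1)) • v j := by
            simp [hwdef, hk]
          have hwk : w k = ∑ j ∈ Finset.range (k + 1), c (rv + j - k) • v j := by
            simp [hwdef, show k < rv by omega]
          have hXw : X.mulVec (w (k + 1)) = - Y.mulVec (w k) := by
            rw [hwk1, hwk, Finset.sum_range_succ']
            rw [show ∀ (u z : Fin n → K), X.mulVec (u + z) = X.mulVec u + X.mulVec z from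
              fun u z => Matrix.mulVec_add X u z]
            have hz : X.mulVec (c (rv + 0 - (k + 1)) • v 0) = 0 := by
              rw [Matrix.mulVec_smul, hC1, smul_zero]
            rw [hz, add_zero]
            have hXsum : X.mulVec (∑ j ∈ Finset.range (k + 1), c (rv + (j + 1) - (k + 1)) • v (j + 1))
                = ∑ j ∈ Finset.range (k + 1), c (rv + j - k) • X.mulVec (v (j + 1)) := by
              rw [← Matrix.mulVecLin_apply, map_sum]
              refine Finset.sum_congr rfl fun j _ => ?_
              rw [_root_.map_smul, Matrix.mulVecLin_apply]
              congr 2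
              omega
            rw [hXsum]
            have hYsum : Y.mulVec (∑ j ∈ Finset.range (k + 1), c (rv + j - k) • v j)
                = ∑ j ∈ Finset.range (k + 1), c (rv + j - k) • Y.mulVec (v j) := by
              rw [← Matrix.mulVecLin_apply, map_sum]
              exact Finset.sum_congr rfl fun j _ => by rw [_root_.map_smul, Matrix.mulVecLin_apply]
            rw [hYsum, ← Finset.sum_neg_distrib]
            exact Finset.sum_congr rfl fun j _ => by rw [hXv j, smul_neg]
          rw [hXw]; abel
        · by_cases hk2 : k + 1 = rv
          · have hwk1 : w (k + 1) = 0 := by simp [hwdef, hk]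
            have hwk : w k = ∑ j ∈ Finset.range (k + 1), c (j + 1) • v j := by
              have : w k = ∑ j ∈ Finset.range (k + 1), c (rv + j - k) • v j := by
                simp [hwdef, show k < rv by omega]
              rw [this]
              exact Finset.sum_congr rfl fun j _ => by congr 2; omega
            have hYw : Y.mulVec (w k) = 0 := by
              rw [hwk]
              have h1 : Y.mulVec (∑ j ∈ Finset.range (k + 1), c (j + 1) • v j)
                  = ∑ j ∈ Finset.range (k + 1), c (j + 1) • Y.mulVec (v j) := by
                rw [← Matrix.mulVecLin_apply, map_sum]
                exact Finset.sum_congr rfl fun j _ => by rw [_root_.map_smul, Matrix.mulVecLin_apply]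
              rw [h1]
              have h2 : ∀ j, Y.mulVec (v j) = - X.mulVec (v (j + 1)) := fun j => by
                rw [hXv j, neg_neg]
              calc ∑ j ∈ Finset.range (k + 1), c (j + 1) • Y.mulVec (v j)
                  = - X.mulVec (∑ j ∈ Finset.range (k + 1), c (j + 1) • v (j + 1)) := by
                    rw [← Matrix.mulVecLin_apply, map_sum, ← Finset.sum_neg_distrib]
                    refine Finset.sum_congr rfl fun j _ => ?_
                    rw [_root_.map_smul, Matrix.mulVecLin_apply, h2 j, smul_neg]
                _ = 0 := by
                    have h3 : ∑ j ∈ Finset.range (k + 1), c (j + 1) • v (j + 1)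
                        = - (c 0 • v 0) := by
                      have h4 := hcsum'
                      rw [← hk2, Finset.sum_range_succ'] at h4
                      exact eq_neg_of_add_eq_zero_left h4
                    rw [h3]
                    rw [show ∀ (u : Fin n → K), X.mulVec (-u) = - X.mulVec u from fun u => by
                      rw [← Matrix.mulVecLin_apply, map_neg, Matrix.mulVecLin_apply]]
                    rw [Matrix.mulVec_smul, hC1, smul_zero, neg_zero, neg_zero]
            rw [hwk1, hYw, Matrix.mulVec_zero, add_zero]
          · have hwk1 : w (k + 1) = 0 := by simp [hwdef, hk]
            have hwk : w k = 0 := by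
              rw [hwdef]; simp only []
              rw [if_neg (by omega)]
            rw [hwk1, hwk, Matrix.mulVec_zero, Matrix.mulVec_zero, add_zero]
      · intro i hi
        rw [hwdef]; simp only []
        rw [if_neg (by omega)]
      · refine ⟨0, ?_⟩
        rw [hw0]
        exact smul_ne_zero (by rw [hcr]; exact hgr) hv0
    exact absurd ⟨w, hwsol⟩ (Nat.find_min hex (by omega))

variable {v' : ℕ → Fin n → K}

lemma hXv' (hC2 : ∀ i, X.mulVec (v' (i + 1)) + Y.mulVec (v' i) = 0) (j : ℕ) :
    X.mulVec (v' (j + 1)) = - Y.mulVec (v' j) :=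
  eq_neg_of_add_eq_zero_left (hC2 j)

lemma exists_block (hm : 0 < m) (hmn : m < n) (hnd : ¬ (n - m) ∣ m) :
    ∃ (p t : ℕ) (S : Submodule K (Fin m → K)) (T : Submodule K (Fin n → K)),
      Module.finrank K S = p ∧ Module.finrank K T = t ∧ 0 < p ∧ 0 < t ∧ t < n ∧
      m * n < n * p + m * t ∧
      ∀ u ∈ S, ∀ z ∈ T, u ⬝ᵥ X.mulVec z = 0 ∧ u ⬝ᵥ Y.mulVec z = 0 := by
  classical
  obtain ⟨ε, v, ⟨hC1, hC2, hsupp, _⟩, hεle, hindep⟩ := exists_min_sol X Y hm hmn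
  set q := n - m with hq
  have hq0 : 0 < q := by omega
  have hεq : ε * q < m := by
    have h1 : ε * q ≤ (m / q) * q := Nat.mul_le_mul_right q hεle
    have h2 : (m / q) * q ≤ m := Nat.div_mul_le_self m q
    have h3 : ε * q ≠ m := fun h => hnd ⟨ε, by rw [← h]; ring⟩
    omega
  have hεm : ε < m := by
    rcases Nat.eq_zero_or_pos ε with h | h
    · omega
    · calc ε = ε * 1 := (mul_one ε).symm
        _ ≤ ε * q := Nat.mul_le_mul_left ε hq0
        _ < m := hεq
  -- T : span of the coefficients
  set T : Submodule K (Fin n → K) :=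
    Submodule.span K (Set.range fun i : Fin (ε + 1) => v i.val) with hT
  have hTrank : Module.finrank K T = ε + 1 := by
    rw [hT, finrank_span_eq_card hindep, Fintype.card_fin]
  -- the linear functional map
  set Ψ : (Fin m → K) →ₗ[K] (Fin ε → K) :=
    { toFun := fun u => fun i => u ⬝ᵥ Y.mulVec (v i.val)
      map_add' := by intro u w; funext i; simp [add_dotProduct]
      map_smul' := by intro c u; funext i; simp [smul_dotProduct] } with hΨ
  set S : Submodule K (Fin m → K) := LinearMap.ker Ψ with hS
  set p := Module.finrank K S with hp
  have hrank : Module.finrank K (LinearMap.range Ψ) + p = m := by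
    rw [hp, hS]
    rw [LinearMap.finrank_range_add_finrank_ker]
    simp [Module.finrank_pi]
  have hrangele : Module.finrank K (LinearMap.range Ψ) ≤ ε := by
    have := Submodule.finrank_le (LinearMap.range Ψ)
    simpa [Module.finrank_pi] using this
  have hpge : m ≤ p + ε := by omega
  have hYε : Y.mulVec (v ε) = 0 := by
    have h := hC2 ε
    rw [hsupp (ε + 1) (by omega)] at h
    simpa using h
  refine ⟨p, ε + 1, S, T, rfl, hTrank, by omega, by omega, by omega, ?_, ?_⟩
  · -- numeric inequality
    have hn' : n = m + q := by omega
    have h1 : (m + q) * m ≤ (m + q) * p + (m + q) * ε := by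
      calc (m + q) * m ≤ (m + q) * (p + ε) := Nat.mul_le_mul_left _ hpge
        _ = (m + q) * p + (m + q) * ε := by ring
    have h2 : ε * q = q * ε := by ring
    nlinarith
  · -- vanishing block
    intro u hu z hz
    have hgen : ∀ i : Fin (ε + 1), u ⬝ᵥ X.mulVec (v i.val) = 0 ∧ u ⬝ᵥ Y.mulVec (v i.val) = 0 := by
      intro i
      have hker : ∀ j, j < ε → u ⬝ᵥ Y.mulVec (v j) = 0 := by
        intro j hj
        have := LinearMap.mem_ker.mp hu
        have := congrFun this ⟨j, hj⟩
        simpa [hΨ] using this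
      constructor
      · rcases Nat.eq_zero_or_pos i.val with h0 | hpos
        · rw [h0, hC1, dotProduct_zero]
        · obtain ⟨j, hj⟩ : ∃ j, i.val = j + 1 := ⟨i.val - 1, by omega⟩
          rw [hj, hXv' X Y hC2 j, dotProduct_neg, hker j (by have := i.isLt; omega), neg_zero]
      · rcases Nat.lt_or_ge i.val ε with h | h
        · exact hker i.val h
        · have : i.val = ε := by have := i.isLt; omega
          rw [this, hYε, dotProduct_zero]
    refine Submodule.span_induction ?_ ?_ ?_ ?_ hz
    · rintro z ⟨i, rfl⟩
      exact hgen i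
    · simp
    · intro z1 z2 _ _ h1 h2
      constructor <;> rw [Matrix.mulVec_add, dotProduct_add] <;>
        simp [h1.1, h1.2, h2.1, h2.2]
    · intro a z _ h
      constructor <;> rw [Matrix.mulVec_smul, dotProduct_smul] <;>
        simp [h.1, h.2]

end Min

section Adapted

lemma exists_adapted {N w : ℕ} (hw : 0 < w) (W : Submodule K (Fin N → K))
    (hW : Module.finrank K W = w) :
    ∃ (e : Fin w ⊕ Fin (N - w) ≃ Fin N) (G : Matrix (Fin N) (Fin N) K),
      G.det = 1 ∧ ∀ l : Fin w, (fun r => G r (e (Sum.inl l))) ∈ W := by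
  classical
  obtain ⟨W', hc⟩ := Submodule.exists_isCompl W
  have hN : Module.finrank K (Fin N → K) = N := by simp [Module.finrank_pi]
  have hsum : Module.finrank K W + Module.finrank K W' = N := by
    rw [Submodule.finrank_add_eq_of_isCompl hc, hN]
  have hW' : Module.finrank K W' = N - w := by omega
  have hwN : w ≤ N := by omega
  let bW : Module.Basis (Fin w) K W := Module.finBasisOfFinrankEq K W hW
  let bW' : Module.Basis (Fin (N - w)) K W' := Module.finBasisOfFinrankEq K W' hW'
  let e : Fin w ⊕ Fin (N - w) ≃ Fin N :=
    finSumFinEquiv.trans (finCongr (by omega))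
  let B : Module.Basis (Fin N) K (Fin N → K) :=
    ((bW.prod bW').map (Submodule.prodEquivOfIsCompl W W' hc)).reindex e
  have hBinl : ∀ l : Fin w, (B (e (Sum.inl l)) : Fin N → K) ∈ W := by
    intro l
    have : B (e (Sum.inl l)) = Submodule.prodEquivOfIsCompl W W' hc ((bW.prod bW') (Sum.inl l)) := by
      simp [B, Module.Basis.reindex_apply]
    rw [this, Module.Basis.prod_apply]
    simp only [Sum.elim_inl]
    rw [Submodule.coe_prodEquivOfIsCompl']
    simp
  let G₀ : Matrix (Fin N) (Fin N) K := (Pi.basisFun K (Fin N)).toMatrix ⇑B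
  haveI : Invertible G₀ := (Pi.basisFun K (Fin N)).invertibleToMatrix B
  have hdet0 : G₀.det ≠ 0 := (Matrix.isUnit_det_of_invertible G₀).ne_zero
  let c0 : Fin N := e (Sum.inl ⟨0, hw⟩)
  let D : Matrix (Fin N) (Fin N) K :=
    Matrix.diagonal (fun i => if i = c0 then G₀.det⁻¹ else 1)
  refine ⟨e, G₀ * D, ?_, ?_⟩
  · rw [Matrix.det_mul, Matrix.det_diagonal]
    rw [Finset.prod_ite_eq' Finset.univ c0 (fun _ => G₀.det⁻¹)]
    simp [Finset.mem_univ, mul_inv_cancel₀ hdet0]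
  · intro l
    have hcol : ∀ r, (G₀ * D) r (e (Sum.inl l)) =
        (if e (Sum.inl l) = c0 then G₀.det⁻¹ else 1) * (B (e (Sum.inl l)) : Fin N → K) r := by
      intro r
      rw [Matrix.mul_diagonal, mul_comm]
      simp [G₀, Module.Basis.toMatrix_apply, Pi.basisFun_repr]
    have : (fun r => (G₀ * D) r (e (Sum.inl l))) =
        (if e (Sum.inl l) = c0 then G₀.det⁻¹ else 1) • (B (e (Sum.inl l)) : Fin N → K) := by
      funext r
      rw [hcol r]
      simp
    rw [this]
    exact Submodule.smul_mem W _ (hBinl l)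

end Adapted

lemma prod_zpow_units {G : Type*} [CommGroup G] {ι : Type*} (s : Finset ι) (u : G) (f : ι → ℤ) :
    (∏ i ∈ s, u ^ f i) = u ^ (∑ i ∈ s, f i) := by
  classical
  induction s using Finset.induction with
  | empty => simp
  | insert _ _ h ih => rw [Finset.prod_insert h, Finset.sum_insert h, ih, _root_.zpow_add]

section Destab
variable {m n : ℕ}

lemma matrix_entry_dot (R : Matrix (Fin m) (Fin m) K) (Sq : Matrix (Fin n) (Fin n) K)
    (Z : Matrix (Fin m) (Fin n) K) (i : Fin m) (j : Fin n) :
    (Rᵀ * Z * Sq) i j = (fun r => R r i) ⬝ᵥ Z.mulVec (fun c => Sq c j) := by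
  simp only [Matrix.mul_apply, Matrix.transpose_apply, Matrix.mulVec, dotProduct,
    Finset.sum_mul, Finset.mul_sum]
  rw [Finset.sum_comm]
  exact Finset.sum_congr rfl fun r _ => Finset.sum_congr rfl fun c _ => by ring

lemma exists_destab (hm : 0 < m) (hmn : m < n) (hnd : ¬ (n - m) ∣ m)
    (X Y : Matrix (Fin m) (Fin n) K) :
    ∃ (R : Matrix (Fin m) (Fin m) K) (Sq : Matrix (Fin n) (Fin n) K)
      (a : Fin m → ℤ) (b : Fin n → ℤ),
      R.det = 1 ∧ Sq.det = 1 ∧ (∑ i, a i) = 0 ∧ (∑ j, b j) = 0 ∧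
      ∀ i j, 0 < a i + b j ∨
        ((Rᵀ * X * Sq) i j = 0 ∧ (Rᵀ * Y * Sq) i j = 0) := by
  classical
  obtain ⟨p, t, S, T, hSr, hTr, hp0, ht0, htn, hkey, hblock⟩ := exists_block X Y hm hmn hnd
  have hpm : p ≤ m := by
    rw [← hSr]
    have := Submodule.finrank_le S
    simpa [Module.finrank_pi] using this
  have htn' : t ≤ n := le_of_lt htn
  obtain ⟨eS, R, hRdet, hRcol⟩ := exists_adapted hp0 S hSr
  obtain ⟨eT, Sq, hSqdet, hSqcol⟩ := exists_adapted ht0 T hTr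
  set Bz : ℤ := 2 * t * ((n - t : ℕ) : ℤ) with hBz
  set Cz : ℤ := 2 * ((m - p : ℕ) : ℤ) * ((n - t : ℕ) : ℤ) + 1 with hCz
  set a : Fin m → ℤ :=
    fun i => Sum.elim (fun _ => -((m - p : ℕ) : ℤ) * Bz) (fun _ => (p : ℤ) * Bz) (eS.symm i) with ha
  set b : Fin n → ℤ :=
    fun j => Sum.elim (fun _ => -((n - t : ℕ) : ℤ) * Cz) (fun _ => (t : ℤ) * Cz) (eT.symm j) with hb
  have ht'1 : 1 ≤ ((n - t : ℕ) : ℤ) := by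
    have : 1 ≤ n - t := by omega
    exact_mod_cast this
  have hkeyZ : ((m - p : ℕ) : ℤ) * ((n - t : ℕ) : ℤ) < (p : ℤ) * (t : ℤ) := by
    have h1 : (m : ℤ) * n < n * p + m * t := by exact_mod_cast hkey
    have h2 : ((m - p : ℕ) : ℤ) = (m : ℤ) - p := by push_cast [hpm]; ring
    have h3 : ((n - t : ℕ) : ℤ) = (n : ℤ) - t := by push_cast [htn']; ring
    rw [h2, h3]
    nlinarith
  refine ⟨R, Sq, a, b, hRdet, hSqdet, ?_, ?_, ?_⟩
  · rw [ha]
    rw [Equiv.sum_comp eS.symm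
      (Sum.elim (fun _ : Fin p => -((m - p : ℕ) : ℤ) * Bz) (fun _ : Fin (m - p) => (p : ℤ) * Bz))]
    rw [Fintype.sum_sum_type]
    simp only [Sum.elim_inl, Sum.elim_inr, Finset.sum_const, Finset.card_univ, Fintype.card_fin, nsmul_eq_mul]
    ring
  · rw [hb]
    rw [Equiv.sum_comp eT.symm
      (Sum.elim (fun _ : Fin t => -((n - t : ℕ) : ℤ) * Cz) (fun _ : Fin (n - t) => (t : ℤ) * Cz))]
    rw [Fintype.sum_sum_type]
    simp only [Sum.elim_inl, Sum.elim_inr, Finset.sum_const, Finset.card_univ, Fintype.card_fin, nsmul_eq_mul]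
    ring
  · intro i j
    rcases h1 : eS.symm i with l | rr <;> rcases h2 : eT.symm j with l2 | r2
    · right
      have hi : eS (Sum.inl l) = i := by rw [← h1]; simp
      have hj : eT (Sum.inl l2) = j := by rw [← h2]; simp
      have hu : (fun r => R r i) ∈ S := by rw [← hi]; exact hRcol l
      have hz : (fun c => Sq c j) ∈ T := by rw [← hj]; exact hSqcol l2
      have := hblock _ hu _ hz
      rw [matrix_entry_dot, matrix_entry_dot]
      exact this
    · left
      have hab : a i + b j = -((m - p : ℕ) : ℤ) * Bz + (t : ℤ) * Cz := by
        simp only [ha, hb, h1, h2, Sum.elim_inl, Sum.elim_inr]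
      rw [hab, hBz, hCz]
      have htt : 0 < (t : ℤ) := by exact_mod_cast ht0
      nlinarith
    · left
      have hab : a i + b j = (p : ℤ) * Bz + (-((n - t : ℕ) : ℤ) * Cz) := by
        simp only [ha, hb, h1, h2, Sum.elim_inl, Sum.elim_inr]
      rw [hab, hBz, hCz]
      have hfac : (1 : ℤ) ≤ 2 * ((p : ℤ) * t) - 2 * (((m - p : ℕ) : ℤ) * ((n - t : ℕ) : ℤ)) - 1 := by
        linarith
      nlinarith [mul_le_mul ht'1 hfac (by norm_num) (by linarith)]
    · left
      have hab : a i + b j = (p : ℤ) * Bz + (t : ℤ) * Cz := by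
        simp only [ha, hb, h1, h2, Sum.elim_inl, Sum.elim_inr]
      rw [hab, hBz, hCz]
      have htt : 0 < (t : ℤ) := by exact_mod_cast ht0
      have hpp : 0 < (p : ℤ) := by exact_mod_cast hp0
      have hss : 0 ≤ ((m - p : ℕ) : ℤ) := by positivity
      have e1 : 0 ≤ (p : ℤ) * (2 * t * ((n - t : ℕ) : ℤ)) := by positivity
      have e2 : (t : ℤ) ≤ (t : ℤ) * (2 * ((m - p : ℕ) : ℤ) * ((n - t : ℕ) : ℤ) + 1) := by
        nlinarith
      linarith

end Destab

section Main

variable {m n : ℕ}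

lemma matrix_entry_sum (P : Matrix (Fin m) (Fin m) K) (Q : Matrix (Fin n) (Fin n) K)
    (Z : Matrix (Fin m) (Fin n) K) (i : Fin m) (j : Fin n) :
    (Pᵀ * Z * Q) i j = ∑ a' : Fin m, ∑ b' : Fin n, P a' i * Q b' j * Z a' b' := by
  rw [matrix_entry_dot]
  simp only [dotProduct, Matrix.mulVec]
  refine Finset.sum_congr rfl fun a' _ => ?_
  rw [Finset.mul_sum]
  exact Finset.sum_congr rfl fun b' _ => by ring

lemma eval_action (P : Matrix (Fin m) (Fin m) K) (Q : Matrix (Fin n) (Fin n) K)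
    (x : Fin m × Fin n × Fin 2 → K) (f : MvPolynomial (Fin m × Fin n × Fin 2) K) :
    eval x (slPairAction K m n P Q f) =
      eval (fun v => ∑ a : Fin m, ∑ b : Fin n, P a v.1 * Q b v.2.1 * x (a, b, v.2.2)) f := by
  have h1 : eval x (slPairAction K m n P Q f)
      = eval₂ ((eval x).comp (algebraMap K (MvPolynomial (Fin m × Fin n × Fin 2) K)))
          (fun v => eval x (∑ a : Fin m, ∑ b : Fin n,
            C (P a v.1 * Q b v.2.1) * X (a, b, v.2.2))) f := by
    rw [slPairAction, aeval_def]
    exact eval₂_comp_left (eval x) _ _ f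
  rw [h1]
  have h2 : (eval x).comp (algebraMap K (MvPolynomial (Fin m × Fin n × Fin 2) K))
      = RingHom.id K := by
    ext c; simp
  rw [h2]
  have h3 : (fun v : Fin m × Fin n × Fin 2 => eval x (∑ a : Fin m, ∑ b : Fin n,
        C (P a v.1 * Q b v.2.1) * X (a, b, v.2.2)))
      = fun v => ∑ a : Fin m, ∑ b : Fin n, P a v.1 * Q b v.2.1 * x (a, b, v.2.2) := by
    funext v
    rw [map_sum]
    refine Finset.sum_congr rfl fun a' _ => ?_
    rw [map_sum]
    refine Finset.sum_congr rfl fun b' _ => ?_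
    simp
  rw [h3]
  rfl

lemma eval_eval₂ (τ : K) (N : Fin m × Fin n × Fin 2 → Polynomial K)
    (f : MvPolynomial (Fin m × Fin n × Fin 2) K) :
    Polynomial.eval τ (MvPolynomial.eval₂ (Polynomial.C : K →+* Polynomial K) N f) =
      eval (fun v => (N v).eval τ) f := by
  have h0 : Polynomial.eval τ (MvPolynomial.eval₂ (Polynomial.C : K →+* Polynomial K) N f)
      = (Polynomial.evalRingHom τ) (MvPolynomial.eval₂ (Polynomial.C : K →+* Polynomial K) N f) := rfl
  rw [h0, eval₂_comp_left]
  have h2 : (Polynomial.evalRingHom τ).comp (Polynomial.C : K →+* Polynomial K)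
      = RingHom.id K := by
    ext c; simp
  rw [h2]
  rfl

variable [Infinite K]

lemma invariant_eval_const (hm : 0 < m) (hmn : m < n) (hnd : ¬ (n - m) ∣ m)
    (f : MvPolynomial (Fin m × Fin n × Fin 2) K)
    (hf : ∀ (P : Matrix (Fin m) (Fin m) K) (Q : Matrix (Fin n) (Fin n) K),
      P.det = 1 → Q.det = 1 → slPairAction K m n P Q f = f)
    (x : Fin m × Fin n × Fin 2 → K) :
    eval x f = eval (fun _ => 0) f := by
  classical
  set Z : Fin 2 → Matrix (Fin m) (Fin n) K := fun k => Matrix.of fun i j => x (i, j, k) with hZ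
  obtain ⟨R, Sq, a, b, hRdet, hSqdet, hasum, hbsum, hpos⟩ := exists_destab hm hmn hnd (Z 0) (Z 1)
  set M : Fin m × Fin n × Fin 2 → K := fun v => (Rᵀ * Z v.2.2 * Sq) v.1 v.2.1 with hM
  have hMpos : ∀ v, M v ≠ 0 → 0 < a v.1 + b v.2.1 := by
    intro v hv
    rcases hpos v.1 v.2.1 with h | h
    · exact h
    · exfalso
      apply hv
      rw [hM]
      have hk : ∀ k : Fin 2, (Rᵀ * Z k * Sq) v.1 v.2.1 = 0 := by
        intro k; fin_cases k
        · exact h.1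
        · exact h.2
      exact hk v.2.2
  set N : Fin m × Fin n × Fin 2 → Polynomial K :=
    fun v => Polynomial.C (M v) * Polynomial.X ^ (a v.1 + b v.2.1).toNat with hN
  set g : Polynomial K := MvPolynomial.eval₂ (Polynomial.C : K →+* Polynomial K) N f with hg
  have claimA : ∀ υ : Kˣ, Polynomial.eval (υ : K) g = eval x f := by
    intro υ
    set Da : Matrix (Fin m) (Fin m) K := Matrix.diagonal (fun i => ((υ ^ a i : Kˣ) : K)) with hDa
    set Db : Matrix (Fin n) (Fin n) K := Matrix.diagonal (fun j => ((υ ^ b j : Kˣ) : K)) with hDb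
    set P : Matrix (Fin m) (Fin m) K := R * Da with hP
    set Q : Matrix (Fin n) (Fin n) K := Sq * Db with hQ
    have hdetDa : Da.det = 1 := by
      rw [hDa, Matrix.det_diagonal]
      have h := map_prod (Units.coeHom K) (fun i => υ ^ a i) Finset.univ
      simp only [Units.coeHom_apply] at h
      rw [← h, prod_zpow_units Finset.univ υ a, hasum]
      simp
    have hdetDb : Db.det = 1 := by
      rw [hDb, Matrix.det_diagonal]
      have h := map_prod (Units.coeHom K) (fun j => υ ^ b j) Finset.univ
      simp only [Units.coeHom_apply] at h
      rw [← h, prod_zpow_units Finset.univ υ b, hbsum]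
      simp
    have hPdet : P.det = 1 := by rw [hP, Matrix.det_mul, hRdet, hdetDa, mul_one]
    have hQdet : Q.det = 1 := by rw [hQ, Matrix.det_mul, hSqdet, hdetDb, mul_one]
    have hfix := hf P Q hPdet hQdet
    have hstep : eval x f =
        eval (fun v => ∑ a' : Fin m, ∑ b' : Fin n,
          P a' v.1 * Q b' v.2.1 * x (a', b', v.2.2)) f := by
      conv_lhs => rw [← hfix]
      exact eval_action P Q x f
    have hmat : ∀ k : Fin 2, Pᵀ * Z k * Q = Da * (Rᵀ * Z k * Sq) * Db := by
      intro k
      rw [hP, hQ, Matrix.transpose_mul, Matrix.diagonal_transpose]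
      simp only [Matrix.mul_assoc]
      rfl
    have hpoint : (fun v : Fin m × Fin n × Fin 2 => ∑ a' : Fin m, ∑ b' : Fin n,
        P a' v.1 * Q b' v.2.1 * x (a', b', v.2.2)) = fun v => (N v).eval (υ : K) := by
      funext v
      have h1 : ∑ a' : Fin m, ∑ b' : Fin n, P a' v.1 * Q b' v.2.1 * x (a', b', v.2.2)
          = (Pᵀ * Z v.2.2 * Q) v.1 v.2.1 := by
        rw [matrix_entry_sum]
        rfl
      rw [h1, hmat v.2.2]
      rw [Matrix.mul_diagonal, Matrix.diagonal_mul]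
      rw [hN]
      simp only [Polynomial.eval_mul, Polynomial.eval_C, Polynomial.eval_pow, Polynomial.eval_X]
      by_cases hMv : M v = 0
      · have hMv' : (Rᵀ * Z v.2.2 * Sq) v.1 v.2.1 = 0 := hMv
        rw [hMv', hMv]
        ring
      · have hw : 0 < a v.1 + b v.2.1 := hMpos v hMv
        have hcoe : ((υ ^ a v.1 : Kˣ) : K) * ((υ ^ b v.2.1 : Kˣ) : K)
            = (υ : K) ^ (a v.1 + b v.2.1).toNat := by
          rw [← Units.val_mul, ← _root_.zpow_add]
          conv_lhs => rw [show a v.1 + b v.2.1 = ((a v.1 + b v.2.1).toNat : ℤ) from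
            (Int.toNat_of_nonneg hw.le).symm]
          rw [zpow_natCast, Units.val_pow_eq_pow_val]
        calc ((υ ^ a v.1 : Kˣ) : K) * (Rᵀ * Z v.2.2 * Sq) v.1 v.2.1 * ((υ ^ b v.2.1 : Kˣ) : K)
            = (Rᵀ * Z v.2.2 * Sq) v.1 v.2.1 *
              (((υ ^ a v.1 : Kˣ) : K) * ((υ ^ b v.2.1 : Kˣ) : K)) := by ring
          _ = M v * (υ : K) ^ (a v.1 + b v.2.1).toNat := by rw [hcoe]
    rw [hg, eval_eval₂, ← hpoint, ← hstep]
  have claimB : Polynomial.eval (0 : K) g = eval (fun _ => (0 : K)) f := by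
    rw [hg, eval_eval₂]
    have hfun : (fun v => (N v).eval (0 : K)) = fun _ : Fin m × Fin n × Fin 2 => (0 : K) := by
      funext v
      rw [hN]
      simp only [Polynomial.eval_mul, Polynomial.eval_C, Polynomial.eval_pow, Polynomial.eval_X]
      by_cases hMv : M v = 0
      · rw [hMv]; ring
      · have hw : 0 < a v.1 + b v.2.1 := hMpos v hMv
        rw [zero_pow (by omega : (a v.1 + b v.2.1).toNat ≠ 0), mul_zero]
    rw [hfun]
  -- g is constant
  set c : K := eval x f with hcdef
  have hzero : g - Polynomial.C c = 0 := by
    apply Polynomial.eq_zero_of_infinite_isRoot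
    have hsub : {τ : K | τ ≠ 0} ⊆ {τ : K | (g - Polynomial.C c).IsRoot τ} := by
      intro τ hτ
      have := claimA (Units.mk0 τ hτ)
      simp only [Set.mem_setOf_eq, Polynomial.IsRoot, Polynomial.eval_sub, Polynomial.eval_C]
      rw [show ((Units.mk0 τ hτ : Kˣ) : K) = τ from rfl] at this
      rw [this]
      simp [hcdef]
    refine Set.Infinite.mono hsub ?_
    have h0 := (Set.finite_singleton (0 : K)).infinite_compl
    have hset : ({0}ᶜ : Set K) = {τ : K | τ ≠ 0} := by
      ext τ
      simp
    rwa [hset] at h0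
  have hgc : g = Polynomial.C c := by
    have := sub_eq_zero.mp hzero
    exact this
  have := claimB
  rw [hgc, Polynomial.eval_C] at this
  rw [← this]

end Main

end SLPairAux

/-- for m < n with n ≠ m + gcd(m,n) over an infinite field K, the
only SL(m,K)×SL(n,K)-invariant polynomials in K[T] are the constants. -/
theorem invariants_trivial (K : Type*) [Field K] [Infinite K] (m n : ℕ)
    (hm : 0 < m) (hmn : m < n) (hne : n ≠ m + Nat.gcd m n) :
    {f : MvPolynomial (Fin m × Fin n × Fin 2) K |
        ∀ (P : Matrix (Fin m) (Fin m) K) (Q : Matrix (Fin n) (Fin n) K),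
          P.det = 1 → Q.det = 1 → slPairAction K m n P Q f = f} =
      Set.range (MvPolynomial.C : K → MvPolynomial (Fin m × Fin n × Fin 2) K) := by
  have hnd : ¬ (n - m) ∣ m := by
    intro hdvd
    apply hne
    have h1 : (n - m) ∣ n := by
      obtain ⟨k, hk⟩ := hdvd
      exact ⟨k + 1, by rw [Nat.mul_add, ← hk, Nat.mul_one]; omega⟩
    have h2 : Nat.gcd m n ∣ n - m :=
      Nat.dvd_sub (Nat.gcd_dvd_right m n) (Nat.gcd_dvd_left m n)
    have h3 : Nat.gcd m n = n - m := Nat.dvd_antisymm h2 (Nat.dvd_gcd hdvd h1)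
    omega
  ext f
  simp only [Set.mem_setOf_eq, Set.mem_range]
  constructor
  · intro hf
    refine ⟨eval (fun _ => 0) f, ?_⟩
    symm
    apply MvPolynomial.funext
    intro x
    rw [SLPairAux.invariant_eval_const hm hmn hnd f hf x]
    simp
  · rintro ⟨c, rfl⟩ P Q _ _
    rw [slPairAction]
    simp [MvPolynomial.aeval_C, MvPolynomial.algebraMap_eq]
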